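/- If the complex numbers i_1, …, i_n are pairwise distinct and all nonzero, then the n×n matrix M over ℂ[x] with entries M_{r,k} = (x + i_k)^r − x^r (1 ≤ r, k ≤ n) is invertible as a matrix over ℂ[x], i.e. its determinant is a unit (a nonzero constant polynomial). -/
import Mathlib


open Polynomial

private lemma key_sum (n : ℕ) (r : Fin n) (a b : ℂ) :
    (a + b) ^ ((r : ℕ) + 1) - a ^ ((r : ℕ) + 1)
      = ∑ s : Fin n,
          ((((r : ℕ) + 1).choose ((s : ℕ) + 1) : ℂ) * a ^ ((r : ℕ) - (s : ℕ)))
            * (b * b ^ (s : ℕ)) := by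
  have h := add_pow b a ((r : ℕ) + 1)
  rw [Finset.sum_range_succ'] at h
  have hsub : ∑ s : Fin n,
        ((((r : ℕ) + 1).choose ((s : ℕ) + 1) : ℂ) * a ^ ((r : ℕ) - (s : ℕ)))
          * (b * b ^ (s : ℕ))
      = ∑ s ∈ Finset.range ((r : ℕ) + 1),
          ((((r : ℕ) + 1).choose (s + 1) : ℂ) * a ^ ((r : ℕ) - s)) * (b * b ^ s) := by
    rw [Fin.sum_univ_eq_sum_range
      (fun s => ((((r : ℕ) + 1).choose (s + 1) : ℂ) * a ^ ((r : ℕ) - s)) * (b * b ^ s))]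
    refine (Finset.sum_subset ?_ ?_).symm
    · intro s hs
      simp only [Finset.mem_range] at *
      have := r.2
      omega
    · intro s hs hns
      simp only [Finset.mem_range] at hs hns
      have hc : ((r : ℕ) + 1).choose (s + 1) = 0 :=
        Nat.choose_eq_zero_of_lt (by omega)
      simp [hc]
  rw [hsub]
  have hcomm : a + b = b + a := add_comm a b
  rw [hcomm, h]
  simp only [pow_zero, Nat.sub_zero, Nat.choose_zero_right, Nat.cast_one, one_mul, mul_one]
  rw [add_sub_cancel_right]
  refine Finset.sum_congr rfl ?_
  intro s hs
  simp only [Finset.mem_range] at hs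
  have h1 : (r : ℕ) + 1 - (s + 1) = (r : ℕ) - s := by omega
  rw [h1, pow_succ']
  ring

/-- If i_1, …, i_n are pairwise distinct and nonzero, then M with entries
    M_{r,k} = (x + i_k)^r − x^r is invertible over ℂ[x]: its determinant is a unit. -/
theorem stmt_15 (n : ℕ) (hn : 1 ≤ n) (i : Fin n → ℂ)
    (hinj : Function.Injective i) (hne : ∀ c : Fin n, i c ≠ 0)
    (M : Matrix (Fin n) (Fin n) (Polynomial ℂ))
    (hM : ∀ r c : Fin n,
      M r c = (X + C (i c)) ^ ((r : ℕ) + 1) - X ^ ((r : ℕ) + 1)) :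
    IsUnit M ∧ IsUnit M.det := by
  -- the constant matrix V with V r k = i k ^ (r+1)
  set V : Matrix (Fin n) (Fin n) ℂ :=
    Matrix.of (fun r k : Fin n => i k * i k ^ (r : ℕ)) with hV
  -- triangular matrix
  have hdetV : V.det ≠ 0 := by
    have hVt : V.transpose = Matrix.of (fun k r : Fin n => i k * (Matrix.vandermonde i) k r) := by
      ext k r
      simp [hV, Matrix.transpose_apply, Matrix.vandermonde]
    have : V.det = (∏ k : Fin n, i k) * (Matrix.vandermonde i).det := by
      rw [← Matrix.det_transpose V, hVt, Matrix.det_mul_column]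
    rw [this, Matrix.det_vandermonde]
    refine mul_ne_zero ?_ ?_
    · exact Finset.prod_ne_zero_iff.mpr fun k _ => hne k
    · refine Finset.prod_ne_zero_iff.mpr fun a _ => ?_
      refine Finset.prod_ne_zero_iff.mpr fun b hb => ?_
      have : b ≠ a := (Finset.mem_Ioi.mp hb).ne'
      exact sub_ne_zero.mpr fun h => this (hinj h)
  -- key: evaluation of det M at any point is det V
  have hevaldet : ∀ a : ℂ, Polynomial.eval a M.det = V.det := by
    intro a
    set T : Matrix (Fin n) (Fin n) ℂ :=
      Matrix.of (fun r s : Fin n =>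
        (((r : ℕ) + 1).choose ((s : ℕ) + 1) : ℂ) * a ^ ((r : ℕ) - (s : ℕ))) with hT
    have hmap : (Polynomial.evalRingHom a).mapMatrix M = T * V := by
      ext r k
      rw [Matrix.mul_apply]
      simp only [RingHom.mapMatrix_apply, Matrix.map_apply, coe_evalRingHom, hM r k]
      simp only [eval_sub, eval_pow, eval_add, eval_X, eval_C]
      exact key_sum n r a (i k)
    have hdetT : T.det = 1 := by
      rw [Matrix.det_of_lowerTriangular T ?_]
      · refine Finset.prod_eq_one fun r _ => by simp [hT]
      · intro r s hrs
        have hlt : (r : ℕ) < (s : ℕ) := hrs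
        have hc : ((r : ℕ) + 1).choose ((s : ℕ) + 1) = 0 :=
          Nat.choose_eq_zero_of_lt (by omega)
        simp [hT, hc]
    calc Polynomial.eval a M.det
        = (Polynomial.evalRingHom a) M.det := rfl
      _ = ((Polynomial.evalRingHom a).mapMatrix M).det := by
            rw [RingHom.map_det]
      _ = (T * V).det := by rw [hmap]
      _ = V.det := by rw [Matrix.det_mul, hdetT, one_mul]
  have hdet : M.det = C V.det := by
    apply Polynomial.funext
    intro a
    rw [hevaldet a, eval_C]
  have hunit : IsUnit M.det := by
    rw [hdet]
    exact Polynomial.isUnit_C.mpr (isUnit_iff_ne_zero.mpr hdetV)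
  exact ⟨(Matrix.isUnit_iff_isUnit_det M).mpr hunit, hunit⟩
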